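/- arXiv:1808.10771 — 2 statements merged into one kernel-verified Lean document; each statement's English description precedes it below -/
import Mathlib

section
/- Let p > 1, m ≥ 1, C₀ ∈ (0, 1], α₀ ≥ 1, and define sequences α_{k+1} = 2·α_k·p and l_{k+1} = C₀·l_k^p/(2·α_k·p)^{2m} for k ≥ 0. If l₀ ≥ (2p)^{2mp/(p-1)²}·α₀^{2m/(p-1)}·C₀^{-1/(p-1)}, then for every k ≥ 0, l_k ≥ (2p)^{2mk/(p-1)}; in particular l_k → ∞ as k → ∞. -/
open Filter

theorem blowup_iteration (p C₀ α₀ : ℝ) (m : ℕ) (hp : 1 < p) (hm : 1 ≤ m)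
    (hC₀ : 0 < C₀) (hC₀' : C₀ ≤ 1) (hα₀ : 1 ≤ α₀)
    (α l : ℕ → ℝ) (hα0 : α 0 = α₀)
    (hαrec : ∀ k, α (k + 1) = 2 * α k * p)
    (hlrec : ∀ k, l (k + 1) = C₀ * l k ^ p / (2 * α k * p) ^ (2 * m))
    (hl0 : (2 * p) ^ (2 * (m : ℝ) * p / (p - 1) ^ 2) * α₀ ^ (2 * (m : ℝ) / (p - 1))
        * C₀ ^ (-(1 / (p - 1))) ≤ l 0) :
    (∀ k : ℕ, (2 * p) ^ (2 * (m : ℝ) * (k : ℝ) / (p - 1)) ≤ l k) ∧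
      Tendsto l atTop atTop := by
  have he : (0:ℝ) < p - 1 := by linarith
  have he' : (p - 1) ≠ 0 := he.ne'
  have hb : (1:ℝ) < 2 * p := by linarith
  have hb0 : (0:ℝ) < 2 * p := by linarith
  have ha0 : (0:ℝ) < α₀ := by linarith
  have hm0 : (0:ℝ) < 2 * (m:ℝ) := by positivity
  set B : ℝ := (2 * p) ^ (2 * (m : ℝ) * p / (p - 1) ^ 2) * α₀ ^ (2 * (m : ℝ) / (p - 1))
        * C₀ ^ (-(1 / (p - 1))) with hBdef
  have hB0 : 0 < B := by positivity
  have hB1 : 1 ≤ B := by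
    have h1 : (1:ℝ) ≤ (2 * p) ^ (2 * (m : ℝ) * p / (p - 1) ^ 2) :=
      Real.one_le_rpow hb.le (by positivity)
    have h2 : (1:ℝ) ≤ α₀ ^ (2 * (m : ℝ) / (p - 1)) :=
      Real.one_le_rpow hα₀ (by positivity)
    have h3 : (1:ℝ) ≤ C₀ ^ (-(1 / (p - 1))) := by
      apply Real.one_le_rpow_of_pos_of_le_one_of_nonpos hC₀ hC₀'
      simp only [neg_nonpos]
      positivity
    calc (1:ℝ) = 1 * 1 * 1 := by ring
    _ ≤ B := by rw [hBdef]; gcongr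
  have hα : ∀ k, α k = α₀ * (2 * p) ^ k := by
    intro k
    induction k with
    | zero => simp [hα0]
    | succ n ih => rw [hαrec, ih]; ring
  -- main induction
  have main : ∀ k : ℕ, (2 * p) ^ (2 * (m : ℝ) * (k : ℝ) / (p - 1)) * B ≤ l k := by
    intro k
    induction k with
    | zero => simpa using hl0
    | succ n ih =>
      have hMn0 : (0:ℝ) < (2 * p) ^ (2 * (m : ℝ) * (n : ℝ) / (p - 1)) * B := by positivity
      have hln0 : 0 < l n := lt_of_lt_of_le hMn0 ih
      have hD : 2 * α n * p = α₀ * (2 * p) ^ (n + 1) := by rw [hα]; ring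
      have hD0 : (0:ℝ) < (2 * α n * p) ^ (2 * m) := by rw [hD]; positivity
      rw [hlrec, le_div_iff₀ hD0]
      have key : ((2 * p) ^ (2 * (m : ℝ) * ((n:ℝ) + 1) / (p - 1)) * B) * (2 * α n * p) ^ (2 * m)
          = C₀ * ((2 * p) ^ (2 * (m : ℝ) * (n : ℝ) / (p - 1)) * B) ^ p := by
        rw [hD, hBdef, ← Real.rpow_natCast (2*p) (n+1)]
        rw [← Real.rpow_natCast (α₀ * (2*p) ^ (((n+1:ℕ)):ℝ)) (2*m)]
        rw [show C₀ = Real.exp (Real.log C₀) from (Real.exp_log hC₀).symm]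
        rw [Real.rpow_def_of_pos (by positivity : (0:ℝ) < α₀ * (2*p) ^ (((n+1:ℕ)):ℝ))]
        simp only [Real.rpow_def_of_pos hb0, Real.rpow_def_of_pos ha0,
          Real.rpow_def_of_pos (Real.exp_pos _)]
        rw [Real.log_mul ha0.ne' (Real.exp_ne_zero _), Real.log_exp]
        simp only [Real.log_exp, ← Real.exp_add]
        simp only [Real.rpow_def_of_pos (Real.exp_pos _), Real.log_exp, ← Real.exp_add]
        rw [Real.exp_eq_exp]
        push_cast
        field_simp
        ring
      have hcast : (((n:ℕ) + 1 : ℕ) : ℝ) = (n : ℝ) + 1 := by push_cast; ring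
      calc ((2 * p) ^ (2 * (m : ℝ) * (((n:ℕ)+1 : ℕ):ℝ) / (p - 1)) * B) * (2 * α n * p) ^ (2 * m)
          = C₀ * ((2 * p) ^ (2 * (m : ℝ) * (n : ℝ) / (p - 1)) * B) ^ p := by rw [hcast, key]
        _ ≤ C₀ * l n ^ p := by gcongr
  constructor
  · exact fun k => le_trans (le_mul_of_one_le_right (by positivity) hB1) (main k)
  · set r : ℝ := (2 * p) ^ (2 * (m:ℝ) / (p - 1)) with hrdef
    have hr : 1 < r := by
      rw [hrdef]
      exact Real.one_lt_rpow_iff_of_pos hb0 |>.mpr (Or.inl ⟨hb, by positivity⟩)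
    have hg : ∀ k : ℕ, (2 * p) ^ (2 * (m : ℝ) * (k : ℝ) / (p - 1)) = r ^ k := by
      intro k
      rw [hrdef, ← Real.rpow_natCast ((2 * p) ^ (2 * (m:ℝ) / (p - 1))) k,
        ← Real.rpow_mul hb0.le]
      congr 1
      ring
    apply tendsto_atTop_mono
      (fun k => le_trans (le_mul_of_one_le_right (by positivity) hB1) (main k))
    have := tendsto_pow_atTop_atTop_of_one_lt hr
    simpa [hg] using this.congr fun k => (hg k).symm |>.symm ▸ rfl
end

section
/- Let n ≥ 3, 2m < n, 0 ≤ a < 2m, p > 1, and suppose u is a positive continuous function on ℝⁿ ∖ {0} satisfying the integral equation u(x) = C ∫_{ℝⁿ} u(y)^p/(|x-y|^{n-2m}|y|^a) dy for all x ≠ 0, where C > 0. Define the Kelvin transform ū(x) := |x|^{2m-n}·u(x/|x|²) for x ≠ 0. Then ū satisfies ū(x) = C ∫_{ℝⁿ} ū(y)^p/(|x-y|^{n-2m}|y|^τ) dy for all x ≠ 0, where τ := n + 2m - a - p(n - 2m). -/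
open MeasureTheory EuclideanGeometry Real Set

theorem kelvin_transform_integral_equation (n m : ℕ) (a p C : ℝ)
    (hn : 3 ≤ n) (hmn : 2 * m < n) (ha0 : 0 ≤ a) (ha : a < 2 * m)
    (hp : 1 < p) (hC : 0 < C)
    (u : EuclideanSpace ℝ (Fin n) → ℝ)
    (hu_pos : ∀ x : EuclideanSpace ℝ (Fin n), x ≠ 0 → 0 < u x)
    (hu_cont : ContinuousOn u {x : EuclideanSpace ℝ (Fin n) | x ≠ 0})
    (heq : ∀ x : EuclideanSpace ℝ (Fin n), x ≠ 0 →
      u x = C * ∫ y : EuclideanSpace ℝ (Fin n),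
        u y ^ p / (‖x - y‖ ^ ((n : ℝ) - 2 * m) * ‖y‖ ^ a)) :
    ∀ x : EuclideanSpace ℝ (Fin n), x ≠ 0 →
      ‖x‖ ^ (2 * (m : ℝ) - n) * u ((‖x‖ ^ 2)⁻¹ • x)
        = C * ∫ y : EuclideanSpace ℝ (Fin n),
            (‖y‖ ^ (2 * (m : ℝ) - n) * u ((‖y‖ ^ 2)⁻¹ • y)) ^ p /
              (‖x - y‖ ^ ((n : ℝ) - 2 * m) *
                ‖y‖ ^ ((n : ℝ) + 2 * m - a - p * ((n : ℝ) - 2 * m))) := by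
  intro x hx
  have hmn' : 2 * (m : ℝ) < n := by exact_mod_cast hmn
  set f : EuclideanSpace ℝ (Fin n) → EuclideanSpace ℝ (Fin n) :=
    fun y => (‖y‖ ^ 2)⁻¹ • y with hfdef
  have hfi : f = inversion (0 : EuclideanSpace ℝ (Fin n)) 1 := by
    funext y
    simp [hfdef, inversion_def, dist_eq_norm, one_div, inv_pow, vsub_eq_sub, vadd_eq_add]
  have hff : ∀ y : EuclideanSpace ℝ (Fin n), f (f y) = y := by
    rw [hfi]; exact inversion_inversion 0 one_ne_zero
  have hfnorm : ∀ y : EuclideanSpace ℝ (Fin n), ‖f y‖ = ‖y‖⁻¹ := by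
    intro y
    have := dist_inversion_center (0 : EuclideanSpace ℝ (Fin n)) y 1
    rw [← hfi] at this
    simpa [dist_eq_norm, one_div] using this
  have hf0 : ∀ y : EuclideanSpace ℝ (Fin n), y ≠ 0 → f y ≠ 0 := by
    intro y hy h
    have h1 : ‖y‖⁻¹ = 0 := by rw [← hfnorm y, h, norm_zero]
    rw [inv_eq_zero, norm_eq_zero] at h1
    exact hy h1
  set s : Set (EuclideanSpace ℝ (Fin n)) := {(0 : EuclideanSpace ℝ (Fin n))}ᶜ with hsdef
  have hs : MeasurableSet s := (measurableSet_singleton _).compl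
  have hmem : ∀ y : EuclideanSpace ℝ (Fin n), y ∈ s ↔ y ≠ 0 :=
    fun y => Set.mem_compl_singleton_iff
  have himg : f '' s = s := by
    apply Subset.antisymm
    · rintro _ ⟨y, hy, rfl⟩
      exact (hmem _).2 (hf0 y ((hmem _).1 hy))
    · intro y hy
      exact ⟨f y, (hmem _).2 (hf0 y ((hmem _).1 hy)), hff y⟩
  have hinj : Set.InjOn f s := by
    rw [hfi]
    exact (inversion_involutive (0 : EuclideanSpace ℝ (Fin n)) one_ne_zero).injective.injOn
  set f' : EuclideanSpace ℝ (Fin n) → EuclideanSpace ℝ (Fin n) →L[ℝ] EuclideanSpace ℝ (Fin n) :=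
    fun y => ((1 : ℝ) / dist y 0) ^ 2 •
      ((ℝ ∙ (y - 0))ᗮ.reflection : EuclideanSpace ℝ (Fin n) →L[ℝ] EuclideanSpace ℝ (Fin n))
    with hf'def
  have hderiv : ∀ y ∈ s, HasFDerivWithinAt f (f' y) s y := by
    intro y hy
    rw [hfi]
    exact (hasFDerivAt_inversion ((hmem y).1 hy)).hasFDerivWithinAt
  have hdet : ∀ y ∈ s, |(f' y).det| = (‖y‖ ^ (2 * n : ℕ))⁻¹ := by
    intro y hy
    have h1 : (f' y).det = (((1:ℝ) / dist y 0) ^ 2) ^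
          (Module.finrank ℝ (EuclideanSpace ℝ (Fin n))) *
        LinearMap.det (((ℝ ∙ (y - 0))ᗮ.reflection :
          EuclideanSpace ℝ (Fin n) →L[ℝ] EuclideanSpace ℝ (Fin n)) :
          EuclideanSpace ℝ (Fin n) →ₗ[ℝ] EuclideanSpace ℝ (Fin n)) := by
      rw [hf'def]
      simp only [ContinuousLinearMap.det]
      rw [ContinuousLinearMap.coe_smul, LinearMap.det_smul]
    have h2 : LinearMap.det (((ℝ ∙ (y - 0))ᗮ.reflection :
          EuclideanSpace ℝ (Fin n) →L[ℝ] EuclideanSpace ℝ (Fin n)) :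
          EuclideanSpace ℝ (Fin n) →ₗ[ℝ] EuclideanSpace ℝ (Fin n))
        = (-1 : ℝ) ^ Module.finrank ℝ (((ℝ ∙ (y - 0))ᗮ)ᗮ :
            Submodule ℝ (EuclideanSpace ℝ (Fin n))) := by
      rw [show (((ℝ ∙ (y - 0))ᗮ.reflection :
          EuclideanSpace ℝ (Fin n) →L[ℝ] EuclideanSpace ℝ (Fin n)) :
          EuclideanSpace ℝ (Fin n) →ₗ[ℝ] EuclideanSpace ℝ (Fin n))
          = ((ℝ ∙ (y - 0))ᗮ.reflection).toLinearMap from rfl, Submodule.det_reflection]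
    rw [h1, h2, abs_mul, abs_pow (-1 : ℝ), abs_neg, abs_one, one_pow, mul_one,
      dist_zero_right, abs_of_nonneg (by positivity), finrank_euclideanSpace_fin,
      one_div, ← pow_mul, inv_pow]
  have hfx : f x ≠ 0 := hf0 x hx
  have hX : 0 < ‖x‖ := norm_pos_iff.2 hx
  have hα : (0:ℝ) < (n:ℝ) - 2*m := by linarith
  have hker : ∀ y : EuclideanSpace ℝ (Fin n), y ≠ 0 →
      ‖x - f y‖ = ‖x‖ / ‖y‖ * ‖f x - y‖ := by
    intro y hy
    have hr : (0:ℝ) < ‖y‖ := norm_pos_iff.2 hy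
    have h := dist_inversion_inversion (c := (0 : EuclideanSpace ℝ (Fin n)))
      (x := f x) (y := y) hfx hy 1
    rw [← hfi, hff x] at h
    simp only [dist_eq_norm, sub_zero, one_pow, hfnorm] at h
    rw [h]
    field_simp
  -- pointwise identity on s
  have hpt : ∀ y ∈ s, |(f' y).det| • ((‖f y‖ ^ (2 * (m : ℝ) - n) * u (f (f y))) ^ p /
        (‖x - f y‖ ^ ((n : ℝ) - 2 * m) *
          ‖f y‖ ^ ((n:ℝ) + 2*m - a - p*((n:ℝ)-2*m))))
      = ‖x‖ ^ (2 * (m : ℝ) - n) * (u y ^ p / (‖f x - y‖ ^ ((n:ℝ) - 2*m) * ‖y‖ ^ a)) := by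
    intro y hy
    have hy0 : y ≠ 0 := (hmem y).1 hy
    have hr : (0:ℝ) < ‖y‖ := norm_pos_iff.2 hy0
    have hU : (0:ℝ) ≤ u y := (hu_pos y hy0).le
    rw [hdet y hy, hff, hfnorm, hker y hy0, smul_eq_mul]
    rw [show (2 * (m:ℝ) - n) = -((n:ℝ) - 2*m) from by ring]
    rw [Real.inv_rpow hr.le, Real.inv_rpow hr.le,
      Real.rpow_neg hr.le, Real.rpow_neg hX.le, inv_inv]
    rw [Real.mul_rpow (Real.rpow_nonneg hr.le _) hU, ← Real.rpow_mul hr.le]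
    rw [Real.mul_rpow (div_nonneg hX.le hr.le) (norm_nonneg _),
      Real.div_rpow hX.le hr.le]
    rcases eq_or_ne ‖f x - y‖ 0 with hA0 | hA0
    · simp [hA0, Real.zero_rpow hα.ne']
    · have hApos : (0:ℝ) < ‖f x - y‖ := lt_of_le_of_ne (norm_nonneg _) (Ne.symm hA0)
      rw [← Real.rpow_natCast ‖y‖ (2*n)]
      push_cast
      have hkey : ‖y‖ ^ (((n:ℝ) - 2*m) * p) * ‖y‖ ^ ((n:ℝ) - 2*m)
          * ‖y‖ ^ ((n:ℝ) + 2*m - a - p*((n:ℝ)-2*m)) * ‖y‖ ^ a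
          = ‖y‖ ^ (2*(n:ℝ)) := by
        rw [← Real.rpow_add hr, ← Real.rpow_add hr, ← Real.rpow_add hr]
        congr 1
        push_cast
        ring
      have h1 : ‖y‖ ^ (((n:ℝ) - 2*m) * p) ≠ 0 := (Real.rpow_pos_of_pos hr _).ne'
      have h2 : ‖y‖ ^ ((n:ℝ) - 2*m) ≠ 0 := (Real.rpow_pos_of_pos hr _).ne'
      have h3 : ‖y‖ ^ ((n:ℝ) + 2*m - a - p*((n:ℝ)-2*m)) ≠ 0 := (Real.rpow_pos_of_pos hr _).ne'
      have h4 : ‖y‖ ^ (a:ℝ) ≠ 0 := (Real.rpow_pos_of_pos hr _).ne'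
      have h5 : ‖y‖ ^ (2*(n:ℝ)) ≠ 0 := (Real.rpow_pos_of_pos hr _).ne'
      have h6 : ‖x‖ ^ ((n:ℝ) - 2*m) ≠ 0 := (Real.rpow_pos_of_pos hX _).ne'
      have h7 : ‖f x - y‖ ^ ((n:ℝ) - 2*m) ≠ 0 := (Real.rpow_pos_of_pos hApos _).ne'
      field_simp
      rw [show (n:ℝ) + 2*m - a - ((n:ℝ) - 2*m) * p = (n:ℝ) + 2*m - a - p*((n:ℝ)-2*m) by ring]
      linear_combination (u y ^ p) * hkey
  -- assemble
  haveI : Nontrivial (EuclideanSpace ℝ (Fin n)) := by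
    have h3 : 0 < n := by omega
    refine ⟨⟨EuclideanSpace.single ⟨0, h3⟩ (1:ℝ), 0, fun h => ?_⟩⟩
    have := congrArg (fun v : EuclideanSpace ℝ (Fin n) => v ⟨0, h3⟩) h
    simp [EuclideanSpace.single_apply] at this
  have hse : s =ᵐ[(volume : Measure (EuclideanSpace ℝ (Fin n)))] Set.univ := by
    rw [ae_eq_univ, hsdef, compl_compl]
    exact measure_singleton 0
  have key : (∫ y : EuclideanSpace ℝ (Fin n),
        (‖y‖ ^ (2 * (m : ℝ) - n) * u ((‖y‖ ^ 2)⁻¹ • y)) ^ p /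
          (‖x - y‖ ^ ((n : ℝ) - 2 * m) *
            ‖y‖ ^ ((n : ℝ) + 2 * m - a - p * ((n : ℝ) - 2 * m))))
      = ‖x‖ ^ (2 * (m : ℝ) - n) *
        ∫ y : EuclideanSpace ℝ (Fin n),
          u y ^ p / (‖f x - y‖ ^ ((n:ℝ) - 2*m) * ‖y‖ ^ a) := by
    calc (∫ y : EuclideanSpace ℝ (Fin n),
        (‖y‖ ^ (2 * (m : ℝ) - n) * u (f y)) ^ p /
          (‖x - y‖ ^ ((n : ℝ) - 2 * m) *
            ‖y‖ ^ ((n : ℝ) + 2 * m - a - p * ((n : ℝ) - 2 * m))))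
        = ∫ y in s, (‖y‖ ^ (2 * (m : ℝ) - n) * u (f y)) ^ p /
            (‖x - y‖ ^ ((n : ℝ) - 2 * m) *
              ‖y‖ ^ ((n : ℝ) + 2 * m - a - p * ((n : ℝ) - 2 * m))) := by
          exact ((setIntegral_congr_set hse).trans setIntegral_univ).symm
      _ = ∫ y in f '' s, (‖y‖ ^ (2 * (m : ℝ) - n) * u (f y)) ^ p /
            (‖x - y‖ ^ ((n : ℝ) - 2 * m) *
              ‖y‖ ^ ((n : ℝ) + 2 * m - a - p * ((n : ℝ) - 2 * m))) := by rw [himg]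
      _ = ∫ y in s, |(f' y).det| • ((‖f y‖ ^ (2 * (m : ℝ) - n) * u (f (f y))) ^ p /
            (‖x - f y‖ ^ ((n : ℝ) - 2 * m) *
              ‖f y‖ ^ ((n:ℝ) + 2*m - a - p*((n:ℝ)-2*m)))) :=
          integral_image_eq_integral_abs_det_fderiv_smul volume hs hderiv hinj _
      _ = ∫ y in s, ‖x‖ ^ (2 * (m : ℝ) - n) *
            (u y ^ p / (‖f x - y‖ ^ ((n:ℝ) - 2*m) * ‖y‖ ^ a)) :=
          setIntegral_congr_fun hs hpt
      _ = ∫ y : EuclideanSpace ℝ (Fin n), ‖x‖ ^ (2 * (m : ℝ) - n) *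
            (u y ^ p / (‖f x - y‖ ^ ((n:ℝ) - 2*m) * ‖y‖ ^ a)) := by
          exact (setIntegral_congr_set hse).trans setIntegral_univ
      _ = ‖x‖ ^ (2 * (m : ℝ) - n) * ∫ y : EuclideanSpace ℝ (Fin n),
            u y ^ p / (‖f x - y‖ ^ ((n:ℝ) - 2*m) * ‖y‖ ^ a) := by
          exact integral_const_mul _ _
  calc ‖x‖ ^ (2 * (m:ℝ) - n) * u ((‖x‖ ^ 2)⁻¹ • x)
      = ‖x‖ ^ (2 * (m:ℝ) - n) * (C * ∫ y : EuclideanSpace ℝ (Fin n),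
          u y ^ p / (‖f x - y‖ ^ ((n:ℝ) - 2*m) * ‖y‖ ^ a)) := by
        rw [show ((‖x‖ ^ 2)⁻¹ • x : EuclideanSpace ℝ (Fin n)) = f x from rfl,
          heq (f x) hfx]
    _ = C * (‖x‖ ^ (2 * (m:ℝ) - n) * ∫ y : EuclideanSpace ℝ (Fin n),
          u y ^ p / (‖f x - y‖ ^ ((n:ℝ) - 2*m) * ‖y‖ ^ a)) := by ring
    _ = C * ∫ y : EuclideanSpace ℝ (Fin n),
            (‖y‖ ^ (2 * (m : ℝ) - n) * u ((‖y‖ ^ 2)⁻¹ • y)) ^ p /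
              (‖x - y‖ ^ ((n : ℝ) - 2 * m) *
                ‖y‖ ^ ((n : ℝ) + 2 * m - a - p * ((n : ℝ) - 2 * m))) := by rw [key]
end
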